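/- (Lemma 2.4) Suppose ε_H ∈ (0,1), ⟨v, ∇²f(x) v⟩ ≥ -ε_H ‖v‖² for all v ∈ ℝⁿ, ‖∇f(x)‖ ≤ U_g with U_g > 0, ∇f(x) ≠ 0, and let d solve (∇²f(x) + 2ε_H I) d = -∇f(x) (the regularized Newton direction). Then the smallest nonnegative integer j_k such that f(x + θ^{j_k} d) < f(x) - (η/6) θ^{3 j_k} ‖d‖³ exists and satisfies j_k ≤ [log_θ( (6/(L_H+η)) · ε_H²/U_g )]_+ + 1, and moreover f(x) - f(x + θ^{j_k} d) ≥ (η/6)·min{(1/(1+√(1+L_H/2)))³, (6θ/(L_H+η))³} · min{‖∇f(x + θ^{j_k} d)‖³ ε_H^{-3}, ε_H³}. -/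

import Mathlib

set_option synthInstance.maxHeartbeats 1000000
set_option maxHeartbeats 2000000
open scoped RealInnerProductSpace

section Helpers

variable {n : ℕ}
local notation "E" => EuclideanSpace ℝ (Fin n)

-- derivative along a line
lemma line_deriv_grad (gradf : E → E) (hessf : E → E →L[ℝ] E)
    (hhess : ∀ x, HasFDerivAt gradf (hessf x) x) (x v : E) (t : ℝ) :
    HasDerivAt (fun s : ℝ => gradf (x + s • v)) (hessf (x + t • v) v) t := by
  have hline : HasDerivAt (fun s : ℝ => x + s • v) v t := by
    simpa using ((hasDerivAt_id t).smul_const v).const_add x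
  exact (hhess (x + t • v)).comp_hasDerivAt t hline

set_option synthInstance.maxHeartbeats 400000 in
lemma hess_cont (hessf : E → E →L[ℝ] E) (L_H : ℝ) (hLH : 0 < L_H)
    (hlip : ∀ x y, ‖hessf x - hessf y‖ ≤ L_H * ‖x - y‖) : Continuous hessf := by
  have : LipschitzWith L_H.toNNReal hessf := by
    apply LipschitzWith.of_dist_le_mul
    intro a b
    simpa [dist_eq_norm, Real.coe_toNNReal _ hLH.le] using hlip a b
  exact this.continuous

lemma grad_taylor (gradf : E → E) (hessf : E → E →L[ℝ] E)
    (hhess : ∀ x, HasFDerivAt gradf (hessf x) x) (L_H : ℝ) (hLH : 0 < L_H)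
    (hlip : ∀ x y, ‖hessf x - hessf y‖ ≤ L_H * ‖x - y‖) (x v : E) :
    ‖gradf (x + v) - gradf x - hessf x v‖ ≤ L_H / 2 * ‖v‖ ^ 2 := by
  set φ : ℝ → E := fun t => gradf (x + t • v) - gradf x - t • hessf x v with hφdef
  have hφ : ∀ t : ℝ, HasDerivAt φ (hessf (x + t • v) v - hessf x v) t := by
    intro t
    have h1 := line_deriv_grad gradf hessf hhess x v t
    have h2 : HasDerivAt (fun s : ℝ => s • hessf x v) (hessf x v) t := by
      simpa using (hasDerivAt_id t).smul_const (hessf x v)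
    exact (h1.sub_const (gradf x)).sub h2
  have hcont : Continuous fun t : ℝ => hessf (x + t • v) v - hessf x v := by
    have hc : Continuous fun t : ℝ => hessf (x + t • v) :=
      (hess_cont hessf L_H hLH hlip).comp (by continuity)
    exact (hc.clm_apply continuous_const).sub continuous_const
  have hFTC : φ 1 - φ 0 = ∫ t in (0:ℝ)..1, (hessf (x + t • v) v - hessf x v) :=
    (intervalIntegral.integral_eq_sub_of_hasDerivAt (fun t _ => hφ t)
      (hcont.intervalIntegrable 0 1)).symm
  have hφ1 : φ 1 - φ 0 = gradf (x + v) - gradf x - hessf x v := by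
    simp [hφdef]
  have hbound : ∀ t ∈ Set.uIcc (0:ℝ) 1, ‖hessf (x + t • v) v - hessf x v‖ ≤ L_H * ‖v‖^2 * t := by
    intro t ht
    rw [Set.uIcc_of_le (by norm_num)] at ht
    calc ‖hessf (x + t • v) v - hessf x v‖ = ‖(hessf (x + t • v) - hessf x) v‖ := by
          simp [ContinuousLinearMap.sub_apply]
      _ ≤ ‖hessf (x + t • v) - hessf x‖ * ‖v‖ := (hessf (x + t • v) - hessf x).le_opNorm v
      _ ≤ (L_H * ‖x + t • v - x‖) * ‖v‖ := by
          gcongr; exact hlip _ _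
      _ = L_H * ‖v‖^2 * t := by
          simp [norm_smul, abs_of_nonneg ht.1]; ring
  have hnorm : ‖∫ t in (0:ℝ)..1, (hessf (x + t • v) v - hessf x v)‖
      ≤ |∫ t in (0:ℝ)..1, L_H * ‖v‖^2 * t| := by
    apply intervalIntegral.norm_integral_le_abs_of_norm_le
    · filter_upwards [MeasureTheory.ae_restrict_mem (by simp [Set.uIoc_of_le (zero_le_one)] : MeasurableSet (Set.uIoc (0:ℝ) 1))] with t ht
      exact hbound t (Set.uIoc_subset_uIcc ht)
    · exact (continuous_const.mul continuous_id).intervalIntegrable 0 1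
  have hint : (∫ t in (0:ℝ)..1, L_H * ‖v‖^2 * t) = L_H / 2 * ‖v‖^2 := by
    rw [intervalIntegral.integral_const_mul, integral_id]; ring
  calc ‖gradf (x + v) - gradf x - hessf x v‖ = ‖φ 1 - φ 0‖ := by rw [hφ1]
    _ ≤ L_H / 2 * ‖v‖ ^ 2 := by
        rw [hFTC]
        rw [hint, abs_of_nonneg (by positivity)] at hnorm
        exact hnorm

lemma grad_cont (gradf : E → E) (hessf : E → E →L[ℝ] E)
    (hhess : ∀ x, HasFDerivAt gradf (hessf x) x) : Continuous gradf :=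
  continuous_iff_continuousAt.mpr fun y => (hhess y).continuousAt

lemma fun_taylor (f : E → ℝ) (gradf : E → E) (hessf : E → E →L[ℝ] E)
    (hgrad : ∀ x, HasGradientAt f (gradf x) x)
    (hhess : ∀ x, HasFDerivAt gradf (hessf x) x) (L_H : ℝ) (hLH : 0 < L_H)
    (hlip : ∀ x y, ‖hessf x - hessf y‖ ≤ L_H * ‖x - y‖) (x v : E) :
    f (x + v) ≤ f x + ⟪gradf x, v⟫ + 1/2 * ⟪v, hessf x v⟫ + L_H/6 * ‖v‖^3 := by
  have hline : ∀ t : ℝ, HasDerivAt (fun s : ℝ => x + s • v) v t := fun t => by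
    simpa using ((hasDerivAt_id t).smul_const v).const_add x
  have hψ : ∀ t : ℝ, HasDerivAt (fun s : ℝ => f (x + s • v)) ⟪gradf (x + t • v), v⟫ t := by
    intro t
    have := ((hgrad (x + t • v)).hasFDerivAt).comp_hasDerivAt t (hline t)
    exact this
  have hgc : Continuous fun t : ℝ => (⟪gradf (x + t • v), v⟫ : ℝ) := by
    exact (Continuous.inner ((grad_cont gradf hessf hhess).comp (by continuity)) continuous_const)
  have hFTC : f (x + v) - f x = ∫ t in (0:ℝ)..1, ⟪gradf (x + t • v), v⟫ := by
    have := intervalIntegral.integral_eq_sub_of_hasDerivAt (fun t _ => hψ t)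
      (hgc.intervalIntegrable 0 1)
    simpa using this.symm
  -- rewrite the difference as an integral
  have hsplit : f (x + v) - f x - ⟪gradf x, v⟫ - 1/2 * ⟪v, hessf x v⟫
      = ∫ t in (0:ℝ)..1, (⟪gradf (x + t • v), v⟫ - ⟪gradf x, v⟫ - t * ⟪v, hessf x v⟫) := by
    rw [intervalIntegral.integral_sub, intervalIntegral.integral_sub]
    · rw [intervalIntegral.integral_const, intervalIntegral.integral_mul_const, integral_id]
      rw [hFTC]; simp
    · exact hgc.intervalIntegrable 0 1
    · exact (continuous_const : Continuous fun _ : ℝ => (⟪gradf x, v⟫:ℝ)).intervalIntegrable 0 1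
    · exact (hgc.sub continuous_const).intervalIntegrable 0 1
    · exact (continuous_id.mul continuous_const).intervalIntegrable 0 1
  have hbound : ∀ t ∈ Set.uIcc (0:ℝ) 1,
      ‖⟪gradf (x + t • v), v⟫ - ⟪gradf x, v⟫ - t * ⟪v, hessf x v⟫‖ ≤ L_H/2 * ‖v‖^3 * t^2 := by
    intro t ht
    rw [Set.uIcc_of_le (by norm_num)] at ht
    have hT2 := grad_taylor gradf hessf hhess L_H hLH hlip x (t • v)
    have heq : ⟪gradf (x + t • v), v⟫ - ⟪gradf x, v⟫ - t * ⟪v, hessf x v⟫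
        = ⟪gradf (x + t • v) - gradf x - hessf x (t • v), v⟫ := by
      rw [inner_sub_left, inner_sub_left, map_smul]
      rw [real_inner_smul_left]
      rw [real_inner_comm v (hessf x v)]
    rw [heq]
    calc ‖(⟪gradf (x + t • v) - gradf x - hessf x (t • v), v⟫ : ℝ)‖
        ≤ ‖gradf (x + t • v) - gradf x - hessf x (t • v)‖ * ‖v‖ := by
          rw [Real.norm_eq_abs]; exact abs_real_inner_le_norm _ _
      _ ≤ (L_H / 2 * ‖t • v‖^2) * ‖v‖ := by gcongr
      _ = L_H/2 * ‖v‖^3 * t^2 := by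
          rw [norm_smul, Real.norm_eq_abs, abs_of_nonneg ht.1]; ring
  have hnorm : ‖∫ t in (0:ℝ)..1, (⟪gradf (x + t • v), v⟫ - ⟪gradf x, v⟫ - t * ⟪v, hessf x v⟫)‖
      ≤ |∫ t in (0:ℝ)..1, L_H/2 * ‖v‖^3 * t^2| := by
    apply intervalIntegral.norm_integral_le_abs_of_norm_le
    · filter_upwards [MeasureTheory.ae_restrict_mem (by simp [Set.uIoc_of_le (zero_le_one)] : MeasurableSet (Set.uIoc (0:ℝ) 1))] with t ht
      exact hbound t (Set.uIoc_subset_uIcc ht)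
    · exact (continuous_const.mul (continuous_id.pow 2)).intervalIntegrable 0 1
  have hint : (∫ t in (0:ℝ)..1, L_H/2 * ‖v‖^3 * t^2) = L_H/6 * ‖v‖^3 := by
    rw [intervalIntegral.integral_const_mul, integral_pow]; ring
  rw [hint, abs_of_nonneg (by positivity)] at hnorm
  rw [← hsplit, Real.norm_eq_abs] at hnorm
  have := abs_le.mp hnorm
  linarith [this.2]

end Helpers

/-- Lemma 2.4: line search along the regularized Newton direction. -/
theorem regularized_newton_step_linesearch
    {n : ℕ} (f : EuclideanSpace ℝ (Fin n) → ℝ)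
    (gradf : EuclideanSpace ℝ (Fin n) → EuclideanSpace ℝ (Fin n))
    (hessf : EuclideanSpace ℝ (Fin n) → EuclideanSpace ℝ (Fin n) →L[ℝ] EuclideanSpace ℝ (Fin n))
    (hf : ContDiff ℝ 2 f)
    (hgrad : ∀ x, HasGradientAt f (gradf x) x)
    (hhess : ∀ x, HasFDerivAt gradf (hessf x) x)
    (L_H : ℝ) (hLH : 0 < L_H)
    (hlip : ∀ x y, ‖hessf x - hessf y‖ ≤ L_H * ‖x - y‖)
    (θ η ε_H U_g : ℝ) (hθ : θ ∈ Set.Ioo (0:ℝ) 1) (hη : 0 < η)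
    (hεH : ε_H ∈ Set.Ioo (0:ℝ) 1) (hUg : 0 < U_g)
    (x d : EuclideanSpace ℝ (Fin n))
    (hpsd : ∀ v : EuclideanSpace ℝ (Fin n), -ε_H * ‖v‖^2 ≤ ⟪v, hessf x v⟫)
    (hgb : ‖gradf x‖ ≤ U_g) (hgne : gradf x ≠ 0)
    (hregnewton : hessf x d + (2*ε_H) • d = -gradf x) :
    ∃ jk : ℕ,
      (f (x + θ^jk • d) < f x - η/6 * θ^(3*jk) * ‖d‖^3) ∧
      (∀ j : ℕ, j < jk → ¬ (f (x + θ^j • d) < f x - η/6 * θ^(3*j) * ‖d‖^3)) ∧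
      (jk : ℝ) ≤ max (Real.logb θ (6/(L_H+η) * ε_H^2 / U_g)) 0 + 1 ∧
      f x - f (x + θ^jk • d) ≥
        η/6 * min ((1/(1+Real.sqrt (1+L_H/2)))^3) ((6*θ/(L_H+η))^3) *
          min (‖gradf (x + θ^jk • d)‖^3 / ε_H^3) (ε_H^3) := by
  classical
  obtain ⟨hθ0, hθ1⟩ := hθ
  obtain ⟨hε0, hε1⟩ := hεH
  have hLη : 0 < L_H + η := by linarith
  have hd0 : d ≠ 0 := by
    intro h
    apply hgne
    have h2 := hregnewton
    rw [h] at h2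
    simp at h2
    exact h2
  have hdn : 0 < ‖d‖ := norm_pos_iff.mpr hd0
  -- inner product identities
  have hinner : ⟪d, hessf x d⟫ + 2*ε_H*‖d‖^2 = -⟪d, gradf x⟫ := by
    have h := congrArg (fun w => (⟪d, w⟫ : ℝ)) hregnewton
    simp only [inner_add_right, real_inner_smul_right, inner_neg_right] at h
    rw [real_inner_self_eq_norm_sq] at h
    linarith
  have hgd : ⟪d, gradf x⟫ ≤ -(ε_H*‖d‖^2) := by
    have := hpsd d
    nlinarith [hinner]
  have hdb : ε_H * ‖d‖ ≤ U_g := by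
    have h1 : ε_H * ‖d‖^2 ≤ -⟪d, gradf x⟫ := by linarith
    have h2 : -⟪d, gradf x⟫ ≤ ‖d‖ * ‖gradf x‖ := by
      have := abs_real_inner_le_norm d (gradf x)
      have h3 := neg_abs_le (⟪d, gradf x⟫ : ℝ)
      linarith
    have h4 : ε_H * ‖d‖^2 ≤ ‖d‖ * U_g := by
      calc ε_H * ‖d‖^2 ≤ ‖d‖ * ‖gradf x‖ := le_trans h1 h2
        _ ≤ ‖d‖ * U_g := by gcongr
    nlinarith
  -- acceptance criterion
  have hacc : ∀ j : ℕ, θ^j * ‖d‖ < 6*ε_H/(L_H+η) →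
      f (x + θ^j • d) < f x - η/6 * θ^(3*j) * ‖d‖^3 := by
    intro j hj
    set t := θ^j with htdef
    have ht0 : 0 < t := pow_pos hθ0 j
    have ht1 : t ≤ 1 := pow_le_one₀ hθ0.le hθ1.le
    have hT1 := fun_taylor f gradf hessf hgrad hhess L_H hLH hlip x (t • d)
    have e1 : (⟪gradf x, t • d⟫ : ℝ) = t * ⟪d, gradf x⟫ := by
      rw [real_inner_smul_right, real_inner_comm]
    have e2 : (⟪t • d, hessf x (t • d)⟫ : ℝ) = t^2 * ⟪d, hessf x d⟫ := by
      rw [map_smul, real_inner_smul_left, real_inner_smul_right]; ring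
    have e3 : ‖t • d‖ = t * ‖d‖ := by
      rw [norm_smul, Real.norm_eq_abs, abs_of_pos ht0]
    rw [e1, e2, e3] at hT1
    have e4 : θ^(3*j) = t^3 := by rw [mul_comm, pow_mul]
    rw [e4]
    have h5 : (L_H+η)*(t*‖d‖) < 6*ε_H := by
      rw [lt_div_iff₀ hLη] at hj
      nlinarith
    have hkey : (L_H+η)*(t*‖d‖)*(t^2*‖d‖^2) < 6*ε_H*(t^2*‖d‖^2) :=
      mul_lt_mul_of_pos_right h5 (by positivity)
    have hq : 0 ≤ (t - t^2/2) * (-(⟪d, gradf x⟫:ℝ) - ε_H*‖d‖^2) :=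
      mul_nonneg (by nlinarith) (by linarith)
    have hq2 : 0 ≤ (t - t^2/2) * (ε_H*‖d‖^2) :=
      mul_nonneg (by nlinarith) (by positivity)
    have hDHD : (⟪d, hessf x d⟫:ℝ) = -⟪d, gradf x⟫ - 2*ε_H*‖d‖^2 := by linarith
    rw [hDHD] at hT1
    nlinarith [hT1, hq, hq2, hkey]
  -- existence of an accepted step
  have hApos : (0:ℝ) < 6*ε_H/(L_H+η)/‖d‖ := by positivity
  obtain ⟨j₀, hj₀⟩ := exists_pow_lt_of_lt_one hApos hθ1
  have hex : ∃ j : ℕ, f (x + θ^j • d) < f x - η/6 * θ^(3*j) * ‖d‖^3 :=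
    ⟨j₀, hacc j₀ ((lt_div_iff₀ hdn).mp hj₀)⟩
  refine ⟨Nat.find hex, Nat.find_spec hex, fun j hj => Nat.find_min hex hj, ?_, ?_⟩
  · -- bound on jk
    set A := 6/(L_H+η) * ε_H^2 / U_g with hAdef
    have hA0 : 0 < A := by positivity
    set B := max (Real.logb θ A) 0 with hBdef
    set j₁ := Nat.floor B + 1 with hj₁def
    have hj₁cast : (j₁:ℝ) = (Nat.floor B : ℝ) + 1 := by
      rw [hj₁def]; push_cast; try ring
    have hBj : Real.logb θ A < (j₁:ℝ) := by
      have h1 : B < (j₁:ℝ) := by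
        rw [hj₁cast]; exact Nat.lt_floor_add_one B
      exact lt_of_le_of_lt (le_max_left _ _) h1
    have hθj₁ : θ^j₁ < A := by
      calc θ^j₁ = θ^((j₁:ℕ):ℝ) := (Real.rpow_natCast θ j₁).symm
        _ < θ^(Real.logb θ A) := Real.rpow_lt_rpow_of_exponent_gt hθ0 hθ1 hBj
        _ = A := Real.rpow_logb hθ0 (ne_of_lt hθ1) hA0
    have hdub : ‖d‖ ≤ U_g / ε_H := (le_div_iff₀ hε0).mpr (by linarith [hdb])
    have haccj₁ : θ^j₁ * ‖d‖ < 6*ε_H/(L_H+η) := by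
      have h1 : θ^j₁ * ‖d‖ ≤ θ^j₁ * (U_g/ε_H) :=
        mul_le_mul_of_nonneg_left hdub (pow_pos hθ0 j₁).le
      have h2 : θ^j₁ * (U_g/ε_H) < A * (U_g/ε_H) :=
        mul_lt_mul_of_pos_right hθj₁ (by positivity)
      have h3 : A * (U_g/ε_H) = 6*ε_H/(L_H+η) := by
        rw [hAdef]; field_simp
      linarith
    have hfind : Nat.find hex ≤ j₁ := Nat.find_le (hacc j₁ haccj₁)
    have hcast : (Nat.find hex : ℝ) ≤ (j₁:ℝ) := Nat.cast_le.mpr hfind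
    have hfl : ((Nat.floor B : ℕ):ℝ) ≤ B := Nat.floor_le (le_max_right _ _)
    have : (j₁:ℝ) ≤ B + 1 := by rw [hj₁cast]; linarith
    linarith
  · -- decrease bound
    have hspec := Nat.find_spec hex
    set k := Nat.find hex with hk
    set s := Real.sqrt (1+L_H/2) with hsdef
    have hs2 : s^2 = 1+L_H/2 := Real.sq_sqrt (by linarith)
    have hs1 : 1 < s := by nlinarith [Real.sqrt_nonneg (1+L_H/2)]
    set w := ‖gradf (x + θ^k • d)‖ with hwdef
    have hw0 : 0 ≤ w := norm_nonneg _
    set M₂ := min (w^3/ε_H^3) (ε_H^3) with hM₂def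
    have hM₂0 : 0 ≤ M₂ := le_min (by positivity) (by positivity)
    have hM₂ε : M₂ ≤ ε_H^3 := min_le_right _ _
    set c1 : ℝ := 1/(1+s) with hc1def
    set c2 : ℝ := 6*θ/(L_H+η) with hc2def
    have hc10 : 0 < c1 := by positivity
    have hc20 : 0 < c2 := by positivity
    have hmm0 : 0 ≤ min (c1^3) (c2^3) := le_min (by positivity) (by positivity)
    -- main inequality: min(c1³,c2³) * M₂ ≤ (θ^k)³‖d‖³
    have hkey : min (c1^3) (c2^3) * M₂ ≤ (θ^k * ‖d‖)^3 := by
      by_cases hk0 : k = 0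
      · -- full step accepted
        have hT2 := grad_taylor gradf hessf hhess L_H hLH hlip x d
        have hgHd : gradf x + hessf x d = -((2*ε_H) • d) := by
          have hthis : gradf x = -(hessf x d + (2*ε_H) • d) := by
            rw [hregnewton, neg_neg]
          rw [hthis]; abel
        have hw1 : w ≤ 2*ε_H*‖d‖ + L_H/2*‖d‖^2 := by
          have heq : gradf (x + d) =
              (gradf (x + d) - gradf x - hessf x d) + (gradf x + hessf x d) := by abel
          have hwd : w = ‖gradf (x + d)‖ := by rw [hwdef, hk0]; simp
          calc w = ‖(gradf (x + d) - gradf x - hessf x d) + (gradf x + hessf x d)‖ := by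
                rw [hwd, ← heq]
            _ ≤ ‖gradf (x + d) - gradf x - hessf x d‖ + ‖gradf x + hessf x d‖ :=
                norm_add_le _ _
            _ ≤ L_H/2*‖d‖^2 + ‖-((2*ε_H) • d)‖ := by
                gcongr
                rw [hgHd]
            _ = 2*ε_H*‖d‖ + L_H/2*‖d‖^2 := by
                rw [norm_neg, norm_smul, Real.norm_eq_abs, abs_of_pos (by linarith)]
                ring
        have hmin : min (w/ε_H) ε_H ≤ (1+s)*‖d‖ := by
          rcases le_or_gt (ε_H/(1+s)) ‖d‖ with hcase | hcase
          · refine le_trans (min_le_right _ _) ?_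
            rw [div_le_iff₀ (by linarith)] at hcase
            nlinarith
          · refine le_trans (min_le_left _ _) ?_
            rw [div_le_iff₀ hε0]
            have h1 : ‖d‖*(1+s) < ε_H := by
              rw [lt_div_iff₀ (by linarith)] at hcase
              linarith
            nlinarith [mul_le_mul_of_nonneg_left h1.le
              (mul_nonneg (sub_nonneg.mpr hs1.le) (norm_nonneg d)), hw1, hs2,
              norm_nonneg d, hε0]
        have hM₂eq : M₂ = (min (w/ε_H) ε_H)^3 := by
          rcases le_total (w/ε_H) ε_H with h | h
          · rw [hM₂def, min_eq_left h, min_eq_left, div_pow]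
            rw [← div_pow]
            exact pow_le_pow_left₀ (by positivity) h 3
          · rw [hM₂def, min_eq_right h, min_eq_right]
            rw [← div_pow]
            exact pow_le_pow_left₀ (by positivity) h 3
        have hstep : c1 * min (w/ε_H) ε_H ≤ ‖d‖ := by
          rw [hc1def]
          rw [div_mul_eq_mul_div, one_mul, div_le_iff₀ (by linarith)]
          nlinarith [hmin]
        have h2 : min (c1^3) (c2^3) * M₂ ≤ c1^3 * M₂ :=
          mul_le_mul_of_nonneg_right (min_le_left _ _) hM₂0
        have h3 : c1^3 * M₂ = (c1 * min (w/ε_H) ε_H)^3 := by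
          rw [hM₂eq, mul_pow]
        have h4 : (c1 * min (w/ε_H) ε_H)^3 ≤ ‖d‖^3 := by
          apply pow_le_pow_left₀ _ hstep
          positivity
        have h5 : (θ^k * ‖d‖)^3 = ‖d‖^3 := by rw [hk0]; simp
        rw [h5]
        linarith
      · -- backtracked at least once
        obtain ⟨j, hj⟩ := Nat.exists_eq_succ_of_ne_zero hk0
        have hfail : ¬ (f (x + θ^j • d) < f x - η/6 * θ^(3*j) * ‖d‖^3) :=
          Nat.find_min hex (show j < Nat.find hex by rw [← hk, hj]; exact Nat.lt_succ_self j)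
        have hge : 6*ε_H/(L_H+η) ≤ θ^j * ‖d‖ := by
          by_contra h
          push_neg at h
          exact hfail (hacc j h)
        have h6 : c2 * ε_H ≤ θ^k * ‖d‖ := by
          rw [hj, pow_succ]
          have h7 : θ * (6*ε_H/(L_H+η)) ≤ θ * (θ^j * ‖d‖) :=
            mul_le_mul_of_nonneg_left hge hθ0.le
          have h8 : c2 * ε_H = θ * (6*ε_H/(L_H+η)) := by
            rw [hc2def]; field_simp
          calc c2 * ε_H = θ * (6*ε_H/(L_H+η)) := h8
            _ ≤ θ * (θ^j * ‖d‖) := h7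
            _ = θ^j * θ * ‖d‖ := by ring
        have h9 : min (c1^3) (c2^3) * M₂ ≤ c2^3 * ε_H^3 :=
          mul_le_mul (min_le_right _ _) hM₂ε hM₂0 (by positivity)
        have h10 : c2^3 * ε_H^3 = (c2*ε_H)^3 := by rw [mul_pow]
        have h11 : (c2*ε_H)^3 ≤ (θ^k * ‖d‖)^3 :=
          pow_le_pow_left₀ (by positivity) h6 3
        linarith
    -- conclude
    have hηpos : (0:ℝ) ≤ η/6 := by linarith
    have hfinal : η/6 * min (c1^3) (c2^3) * M₂ ≤ η/6 * (θ^(3*k) * ‖d‖^3) := by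
      have he : θ^(3*k) * ‖d‖^3 = (θ^k * ‖d‖)^3 := by
        rw [mul_pow, mul_comm 3 k, pow_mul]
      rw [he, mul_assoc]
      exact mul_le_mul_of_nonneg_left hkey hηpos
    nlinarith [hspec, hfinal]
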